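/- Let Ω¹ ⊂ ℝ³ be a bounded open set, let h_n → 0⁺, and let F_n, A_n, X, A ∈ L²(Ω¹; M_{3×3}(ℝ)). Suppose there exist measurable fields R_n : Ω¹ → SO(3) and a constant K such that ∫_{Ω¹} ‖R_n(x) F_n(x) − A_n(x)‖_F² dx ≤ K h_n⁴ for all n, and F_n → X, A_n → A strongly in L². Then Aᵀ A = Xᵀ X almost everywhere in Ω¹. -/

import Mathlib

open MeasureTheory Matrix Filter

attribute [local instance] Matrix.frobeniusNormedAddCommGroup

/-- The set of special orthogonal `3×3` real matrices. -/
def SO3 : Set (Matrix (Fin 3) (Fin 3) ℝ) := {R | Rᵀ * R = 1 ∧ R.det = 1}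

namespace Stmt5Aux

lemma frob_sq (M : Matrix (Fin 3) (Fin 3) ℝ) :
    ‖M‖ ^ 2 = ∑ i, ∑ j, (M i j) ^ 2 := by
  have h0 : (0:ℝ) ≤ ∑ i, ∑ j, ‖M i j‖ ^ (2:ℝ) := by positivity
  rw [Matrix.frobenius_norm_def, ← Real.rpow_natCast (_ ^ (1/2:ℝ)) 2, ← Real.rpow_mul h0]
  norm_num

lemma entry_abs_le (M : Matrix (Fin 3) (Fin 3) ℝ) (i j : Fin 3) :
    |M i j| ≤ ‖M‖ := by
  have h1 : (M i j) ^ 2 ≤ ‖M‖ ^ 2 := by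
    rw [frob_sq]
    have t1 : (M i j) ^ 2 ≤ ∑ j' : Fin 3, (M i j') ^ 2 :=
      Finset.single_le_sum (f := fun j' => (M i j') ^ 2) (fun k _ => sq_nonneg _)
        (Finset.mem_univ j)
    have t2 : (∑ j' : Fin 3, (M i j') ^ 2) ≤ ∑ i' : Fin 3, ∑ j' : Fin 3, (M i' j') ^ 2 :=
      Finset.single_le_sum (f := fun i' => ∑ j' : Fin 3, (M i' j') ^ 2)
        (fun k _ => Finset.sum_nonneg fun l _ => sq_nonneg _) (Finset.mem_univ i)
    linarith
  nlinarith [sq_abs (M i j), abs_nonneg (M i j), norm_nonneg M]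

lemma entry_continuous (i j : Fin 3) :
    Continuous (fun M : Matrix (Fin 3) (Fin 3) ℝ => M i j) := by
  refine LipschitzWith.continuous (K := 1) (LipschitzWith.of_dist_le_mul fun a b => ?_)
  rw [NNReal.coe_one, one_mul, dist_eq_norm, dist_eq_norm]
  have := entry_abs_le (a - b) i j
  simpa [Matrix.sub_apply, Real.norm_eq_abs] using this

lemma so3_norm {Q : Matrix (Fin 3) (Fin 3) ℝ} (hQ : Q ∈ SO3) : ‖Q‖ ≤ 2 := by
  have h1 := congrArg Matrix.trace hQ.1
  have h2 : ∑ j, ∑ i, (Q i j) ^ 2 = 3 := by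
    simpa [Matrix.trace, Matrix.mul_apply, Matrix.diag, sq] using h1
  have h3 : ‖Q‖ ^ 2 = 3 := by
    rw [frob_sq, Finset.sum_comm, h2]
  nlinarith [norm_nonneg Q]

lemma tendsto_of_sq {a : ℕ → ℝ} (h0 : ∀ n, 0 ≤ a n)
    (h : Tendsto (fun n => a n ^ 2) atTop (nhds 0)) : Tendsto a atTop (nhds 0) := by
  have h2 : Tendsto (fun n => Real.sqrt (a n ^ 2)) atTop (nhds (Real.sqrt 0)) :=
    (Real.continuous_sqrt.tendsto 0).comp h
  simpa only [Real.sqrt_zero] using h2.congr fun n => Real.sqrt_sq (h0 n)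

lemma tendsto_transpose {u : ℕ → Matrix (Fin 3) (Fin 3) ℝ} {a : Matrix (Fin 3) (Fin 3) ℝ}
    (hu : Tendsto u atTop (nhds a)) : Tendsto (fun n => (u n)ᵀ) atTop (nhds aᵀ) := by
  replace hu := tendsto_iff_norm_sub_tendsto_zero.1 hu
  refine tendsto_iff_norm_sub_tendsto_zero.2 ?_
  exact hu.congr fun n => by rw [← Matrix.transpose_sub, Matrix.frobenius_norm_transpose]

lemma tendsto_matmul {u v : ℕ → Matrix (Fin 3) (Fin 3) ℝ} {a b : Matrix (Fin 3) (Fin 3) ℝ}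
    (hu : Tendsto u atTop (nhds a)) (hv : Tendsto v atTop (nhds b)) :
    Tendsto (fun n => u n * v n) atTop (nhds (a * b)) := by
  replace hu := tendsto_iff_norm_sub_tendsto_zero.1 hu
  replace hv := tendsto_iff_norm_sub_tendsto_zero.1 hv
  refine tendsto_iff_norm_sub_tendsto_zero.2 ?_
  have key : ∀ n, ‖u n * v n - a * b‖ ≤ ‖u n - a‖ * (‖v n - b‖ + ‖b‖) + ‖a‖ * ‖v n - b‖ := by
    intro n
    have h1 : u n * v n - a * b = (u n - a) * v n + a * (v n - b) := by
      rw [sub_mul, mul_sub]; abel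
    calc ‖u n * v n - a * b‖ = ‖(u n - a) * v n + a * (v n - b)‖ := by rw [h1]
      _ ≤ ‖(u n - a) * v n‖ + ‖a * (v n - b)‖ := norm_add_le _ _
      _ ≤ ‖u n - a‖ * ‖v n‖ + ‖a‖ * ‖v n - b‖ :=
          add_le_add (Matrix.frobenius_norm_mul _ _) (Matrix.frobenius_norm_mul _ _)
      _ ≤ ‖u n - a‖ * (‖v n - b‖ + ‖b‖) + ‖a‖ * ‖v n - b‖ := by
          refine add_le_add (mul_le_mul_of_nonneg_left ?_ (norm_nonneg _)) le_rfl
          calc ‖v n‖ = ‖(v n - b) + b‖ := by rw [sub_add_cancel]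
            _ ≤ ‖v n - b‖ + ‖b‖ := norm_add_le _ _
  refine squeeze_zero (fun n => norm_nonneg _) key ?_
  have : Tendsto (fun n => ‖u n - a‖ * (‖v n - b‖ + ‖b‖) + ‖a‖ * ‖v n - b‖) atTop
      (nhds (0 * (0 + ‖b‖) + ‖a‖ * 0)) :=
    (hu.mul (hv.add tendsto_const_nhds)).add (tendsto_const_nhds.mul hv)
  simpa using this

end Stmt5Aux

open Stmt5Aux

/-- **Core of Proposition 18 of the paper.** If `‖R_n F_n − A_n‖_{L²}² ≤ K h_n⁴` for
rotation-valued fields `R_n`, and `F_n → X`, `A_n → A` strongly in `L²`, then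
`AᵀA = XᵀX` a.e. in `Ω¹`. -/
theorem stmt5 (Ω1 : Set (Fin 3 → ℝ)) (hΩo : IsOpen Ω1) (hΩb : Bornology.IsBounded Ω1)
    (h : ℕ → ℝ) (hh : ∀ n, 0 < h n) (hh0 : Tendsto h atTop (nhds 0))
    (F A : ℕ → (Fin 3 → ℝ) → Matrix (Fin 3) (Fin 3) ℝ)
    (X Alim : (Fin 3 → ℝ) → Matrix (Fin 3) (Fin 3) ℝ)
    (hFL2 : ∀ n, MemLp (F n) 2 (volume.restrict Ω1))
    (hAL2 : ∀ n, MemLp (A n) 2 (volume.restrict Ω1))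
    (hXL2 : MemLp X 2 (volume.restrict Ω1))
    (hAlimL2 : MemLp Alim 2 (volume.restrict Ω1))
    (R : ℕ → (Fin 3 → ℝ) → Matrix (Fin 3) (Fin 3) ℝ)
    (hRmeas : ∀ n i j, Measurable fun x => R n x i j)
    (hRSO : ∀ n, ∀ x ∈ Ω1, R n x ∈ SO3)
    (K : ℝ)
    (hbd : ∀ n, ∫ x in Ω1, ‖R n x * F n x - A n x‖ ^ 2 ≤ K * h n ^ 4)
    (hF : Tendsto (fun n => ∫ x in Ω1, ‖F n x - X x‖ ^ 2) atTop (nhds 0))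
    (hA : Tendsto (fun n => ∫ x in Ω1, ‖A n x - Alim x‖ ^ 2) atTop (nhds 0)) :
    ∀ᵐ x ∂volume.restrict Ω1, (Alim x)ᵀ * Alim x = (X x)ᵀ * X x := by
  have hΩm : MeasurableSet Ω1 := hΩo.measurableSet
  set μ := volume.restrict Ω1 with hμ
  -- the three real-valued sequences
  set q : ℕ → (Fin 3 → ℝ) → ℝ := fun n x => ‖F n x - X x‖ ^ 2 with hq
  set r : ℕ → (Fin 3 → ℝ) → ℝ := fun n x => ‖A n x - Alim x‖ ^ 2 with hr
  set w : ℕ → (Fin 3 → ℝ) → ℝ := fun n x => ‖R n x * F n x - A n x‖ ^ 2 with hw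
  set g : ℕ → (Fin 3 → ℝ) → ℝ := fun n x => q n x + r n x + w n x with hg
  -- integrability of norm-squares of Memℒp functions
  have norm_sq_int : ∀ (f : (Fin 3 → ℝ) → Matrix (Fin 3) (Fin 3) ℝ), MemLp f 2 μ →
      Integrable (fun x => ‖f x‖ ^ 2) μ := by
    intro f hf
    have := hf.integrable_norm_rpow two_ne_zero ENNReal.ofNat_ne_top
    simpa [ENNReal.toReal_ofNat, Real.rpow_two] using this
  have hq_int : ∀ n, Integrable (q n) μ := fun n => norm_sq_int _ ((hFL2 n).sub hXL2)
  have hr_int : ∀ n, Integrable (r n) μ := fun n => norm_sq_int _ ((hAL2 n).sub hAlimL2)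
  -- entry-wise a.e.-measurability
  have hFe : ∀ n (i j : Fin 3), AEMeasurable (fun x => F n x i j) μ := fun n i j =>
    ((entry_continuous i j).comp_aestronglyMeasurable (hFL2 n).1).aemeasurable
  have hAe : ∀ n (i j : Fin 3), AEMeasurable (fun x => A n x i j) μ := fun n i j =>
    ((entry_continuous i j).comp_aestronglyMeasurable (hAL2 n).1).aemeasurable
  have hw_meas : ∀ n, AEMeasurable (w n) μ := by
    intro n
    have : (w n) = fun x => ∑ i, ∑ j,
        ((∑ k, R n x i k * F n x k j) - A n x i j) ^ 2 := by
      funext x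
      show ‖R n x * F n x - A n x‖ ^ 2 = _
      rw [frob_sq]
      refine Finset.sum_congr rfl fun i _ => Finset.sum_congr rfl fun j _ => ?_
      rw [Matrix.sub_apply, Matrix.mul_apply]
    rw [this]
    refine Finset.aemeasurable_fun_sum _ fun i _ => Finset.aemeasurable_fun_sum _ fun j _ => ?_
    exact ((Finset.aemeasurable_fun_sum _ fun k _ =>
      ((hRmeas n i k).aemeasurable.mul (hFe n k j))).sub (hAe n i j)).pow_const 2
  have hw_int : ∀ n, Integrable (w n) μ := by
    intro n
    have hbd_ae : ∀ᵐ x ∂μ, ‖w n x‖ ≤ 8 * ‖F n x‖ ^ 2 + 2 * ‖A n x‖ ^ 2 := by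
      filter_upwards [ae_restrict_mem hΩm] with x hx
      have h1 : ‖R n x * F n x - A n x‖ ≤ 2 * ‖F n x‖ + ‖A n x‖ := by
        calc ‖R n x * F n x - A n x‖ ≤ ‖R n x * F n x‖ + ‖A n x‖ := norm_sub_le _ _
          _ ≤ ‖R n x‖ * ‖F n x‖ + ‖A n x‖ :=
              add_le_add (Matrix.frobenius_norm_mul _ _) le_rfl
          _ ≤ 2 * ‖F n x‖ + ‖A n x‖ := by
              have ha := so3_norm (hRSO n x hx)
              have hb := norm_nonneg (F n x)
              nlinarith
      have h2 : w n x = ‖R n x * F n x - A n x‖ ^ 2 := rfl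
      rw [Real.norm_of_nonneg (by rw [h2]; positivity), h2]
      nlinarith [norm_nonneg (R n x * F n x - A n x), norm_nonneg (F n x), norm_nonneg (A n x),
        sq_nonneg (2 * ‖F n x‖ - ‖A n x‖)]
    refine Integrable.mono' ?_ (hw_meas n).aestronglyMeasurable hbd_ae
    exact ((norm_sq_int _ (hFL2 n)).const_mul 8).add ((norm_sq_int _ (hAL2 n)).const_mul 2)
  have hg_int : ∀ n, Integrable (g n) μ := fun n => ((hq_int n).add (hr_int n)).add (hw_int n)
  -- the integrals of g tend to zero
  have hw0 : Tendsto (fun n => ∫ x, w n x ∂μ) atTop (nhds 0) := by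
    refine squeeze_zero (fun n => integral_nonneg fun x => by positivity) (fun n => hbd n) ?_
    have : Tendsto (fun n => K * h n ^ 4) atTop (nhds (K * 0 ^ 4)) :=
      tendsto_const_nhds.mul (hh0.pow 4)
    simpa using this
  have hg0 : Tendsto (fun n => ∫ x, g n x ∂μ) atTop (nhds 0) := by
    have heq : (fun n => ∫ x, g n x ∂μ)
        = fun n => (∫ x, q n x ∂μ) + (∫ x, r n x ∂μ) + (∫ x, w n x ∂μ) := by
      funext n
      have i1 : Integrable (fun x => q n x + r n x) μ := (hq_int n).add (hr_int n)
      have e1 : ∫ x, q n x + r n x + w n x ∂μ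
          = (∫ x, q n x + r n x ∂μ) + ∫ x, w n x ∂μ := integral_add i1 (hw_int n)
      have e2 : ∫ x, q n x + r n x ∂μ = (∫ x, q n x ∂μ) + ∫ x, r n x ∂μ :=
        integral_add (hq_int n) (hr_int n)
      calc ∫ x, g n x ∂μ = ∫ x, q n x + r n x + w n x ∂μ := rfl
        _ = (∫ x, q n x + r n x ∂μ) + ∫ x, w n x ∂μ := e1
        _ = (∫ x, q n x ∂μ) + (∫ x, r n x ∂μ) + ∫ x, w n x ∂μ := by rw [e2]
    rw [heq]
    simpa using (hF.add hA).add hw0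
  -- convergence of L¹ norms of g
  have hg_nonneg : ∀ n x, 0 ≤ g n x := fun n x => by
    simp only [hg, hq, hr, hw]; positivity
  have heLp : ∀ n, eLpNorm (g n) 1 μ = ENNReal.ofReal (∫ x, g n x ∂μ) := by
    intro n
    rw [eLpNorm_one_eq_lintegral_enorm,
      ofReal_integral_eq_lintegral_ofReal (hg_int n)
        (Filter.Eventually.of_forall fun x => hg_nonneg n x)]
    refine lintegral_congr fun x => ?_
    rw [← ofReal_norm_eq_enorm, Real.norm_of_nonneg (hg_nonneg n x)]
  have heLp0 : Tendsto (fun n => eLpNorm (g n) 1 μ) atTop (nhds 0) := by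
    have := ENNReal.tendsto_ofReal hg0
    rw [ENNReal.ofReal_zero] at this
    exact (this.congr fun n => (heLp n).symm)
  -- convergence in measure and a.e. subsequence
  have htm : TendstoInMeasure μ g atTop (0 : (Fin 3 → ℝ) → ℝ) := by
    refine tendstoInMeasure_of_tendsto_eLpNorm_of_ne_top (E := ℝ)
      (g := (0 : (Fin 3 → ℝ) → ℝ)) one_ne_zero ENNReal.one_ne_top
      (fun n => (hg_int n).1) aestronglyMeasurable_const ?_
    simpa only [sub_zero] using heLp0
  obtain ⟨ns, hns, hae⟩ := htm.exists_seq_tendsto_ae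
  filter_upwards [hae, ae_restrict_mem hΩm] with x hx hxΩ
  simp only [Pi.zero_apply] at hx
  -- pointwise argument
  have hle_q : ∀ i, q (ns i) x ≤ g (ns i) x := fun i => by
    have := hg_nonneg (ns i) x
    have h1 : 0 ≤ r (ns i) x := by simp only [hr]; positivity
    have h2 : 0 ≤ w (ns i) x := by simp only [hw]; positivity
    simp only [hg]; linarith
  have hle_r : ∀ i, r (ns i) x ≤ g (ns i) x := fun i => by
    have h1 : 0 ≤ q (ns i) x := by simp only [hq]; positivity
    have h2 : 0 ≤ w (ns i) x := by simp only [hw]; positivity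
    simp only [hg]; linarith
  have hle_w : ∀ i, w (ns i) x ≤ g (ns i) x := fun i => by
    have h1 : 0 ≤ q (ns i) x := by simp only [hq]; positivity
    have h2 : 0 ≤ r (ns i) x := by simp only [hr]; positivity
    simp only [hg]; linarith
  have hqx : Tendsto (fun i => ‖F (ns i) x - X x‖) atTop (nhds 0) :=
    tendsto_of_sq (fun i => norm_nonneg _)
      (squeeze_zero (fun i => by positivity) hle_q hx)
  have hrx : Tendsto (fun i => ‖A (ns i) x - Alim x‖) atTop (nhds 0) :=
    tendsto_of_sq (fun i => norm_nonneg _)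
      (squeeze_zero (fun i => by positivity) hle_r hx)
  have hwx : Tendsto (fun i => ‖R (ns i) x * F (ns i) x - A (ns i) x‖) atTop (nhds 0) :=
    tendsto_of_sq (fun i => norm_nonneg _)
      (squeeze_zero (fun i => by positivity) hle_w hx)
  have hFx : Tendsto (fun i => F (ns i) x) atTop (nhds (X x)) :=
    tendsto_iff_norm_sub_tendsto_zero.mpr hqx
  have hAx : Tendsto (fun i => A (ns i) x) atTop (nhds (Alim x)) :=
    tendsto_iff_norm_sub_tendsto_zero.mpr hrx
  have hWx : Tendsto (fun i => R (ns i) x * F (ns i) x - A (ns i) x) atTop (nhds 0) := by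
    exact tendsto_zero_iff_norm_tendsto_zero.mpr hwx
  have hRFx : Tendsto (fun i => R (ns i) x * F (ns i) x) atTop (nhds (Alim x)) := by
    have := hWx.add hAx
    simpa using this
  have h2 : Tendsto (fun i => (R (ns i) x * F (ns i) x)ᵀ * (R (ns i) x * F (ns i) x)) atTop
      (nhds ((Alim x)ᵀ * Alim x)) := tendsto_matmul (tendsto_transpose hRFx) hRFx
  have h3 : ∀ i, (R (ns i) x * F (ns i) x)ᵀ * (R (ns i) x * F (ns i) x)
      = (F (ns i) x)ᵀ * F (ns i) x := by
    intro i
    rw [Matrix.transpose_mul, Matrix.mul_assoc, ← Matrix.mul_assoc (R (ns i) x)ᵀ,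
      (hRSO (ns i) x hxΩ).1, Matrix.one_mul]
  have h4 : Tendsto (fun i => (F (ns i) x)ᵀ * F (ns i) x) atTop (nhds ((X x)ᵀ * X x)) :=
    tendsto_matmul (tendsto_transpose hFx) hFx
  exact tendsto_nhds_unique (h2.congr h3) h4
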